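/- There exists an element α ∈ O_∞ that is not 1-approximable, i.e., no sequence of 1-approximations of α converges to α. (This is the case A = F_q[t], where N = 0, of the first assertion of Theorem 1.3 of the paper: O_∞ is not contained in Ψ_{N+1}.) -/

import Mathlib

open FunctionField Filter Polynomial MeasureTheory
open scoped Multiplicative

local notation "ℤₘ₀" => WithZero (Multiplicative ℤ)

variable (Fq : Type) [Field Fq] [Fintype Fq] [DecidableEq (RatFunc Fq)]

/-- The real absolute value attached to a `ℤₘ₀`-valued valuation with base `q`:
`Multiplicative.ofAdd n ↦ q ^ n` and `0 ↦ 0`. -/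
noncomputable def zabs (q : ℕ) (x : WithZero (Multiplicative ℤ)) : ℝ :=
  if hx : x = 0 then 0 else (q : ℝ) ^ Multiplicative.toAdd (WithZero.unzero hx)

/-- The absolute value `|h| = q ^ (-ν_∞ h)` on `K_∞ = F_q((1/t))`. -/
noncomputable def absInfty (q : ℕ) (h : RatFunc.CompletionAtInfty Fq) : ℝ :=
  zabs q (Valued.v h)

/-- The embedding of the polynomial ring `F_q[t]` into `K_∞ = F_q((1/t))`. -/
noncomputable def polyToInfty (p : Polynomial Fq) : RatFunc.CompletionAtInfty Fq :=
  letI := RatFunc.inftyValued Fq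
  UniformSpace.Completion.coe' (α := RatFunc Fq) (algebraMap (Polynomial Fq) (RatFunc Fq) p)

/-- The valuation ring `O_∞ = {α ∈ K_∞ : |α| ≤ 1}`. -/
def Oinfty (q : ℕ) : Set (RatFunc.CompletionAtInfty Fq) := {α | absInfty Fq q α ≤ 1}

noncomputable instance : MeasurableSpace (RatFunc.CompletionAtInfty Fq) := borel _

instance : BorelSpace (RatFunc.CompletionAtInfty Fq) := ⟨rfl⟩

/-- A Haar measure on `K_∞`: a Borel measure invariant under all additive translations,
positive and finite on `O_∞`. -/
def IsHaar (q : ℕ) (μ : Measure (RatFunc.CompletionAtInfty Fq)) : Prop :=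
  (∀ x : RatFunc.CompletionAtInfty Fq, μ.map (fun y => y + x) = μ) ∧
    0 < μ (Oinfty Fq q) ∧ μ (Oinfty Fq q) < ⊤

/-- `f/g` is an `M`-approximation of `α`: `f` and `g` are coprime, `g ≠ 0`, and
`|α - f/g| < q^(-M) / |g|²`. -/
def IsApprox (q : ℕ) (M : ℤ) (α : RatFunc.CompletionAtInfty Fq) (f g : Polynomial Fq) : Prop :=
  g ≠ 0 ∧ IsCoprime f g ∧
    absInfty Fq q (α - polyToInfty Fq f / polyToInfty Fq g) <
      (q : ℝ) ^ (-M) / absInfty Fq q (polyToInfty Fq g) ^ 2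

set_option linter.unusedSectionVars false

section Aux

set_option linter.unusedSectionVars false

theorem zabs_coe (q : ℕ) (m : ℤ) :
    zabs q ((Multiplicative.ofAdd m : Multiplicative ℤ) : ℤₘ₀) = (q : ℝ) ^ m := by
  rw [zabs, dif_neg WithZero.coe_ne_zero, WithZero.unzero_coe, toAdd_ofAdd]

theorem zabs_lt_iff {q : ℕ} (hq : 1 < q) {x y : ℤₘ₀} :
    zabs q x < zabs q y ↔ x < y := by
  have hq' : (1 : ℝ) < q := by exact_mod_cast hq
  rcases eq_or_ne x 0 with hx | hx <;> rcases eq_or_ne y 0 with hy | hy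
  · simp [hx, hy, zabs]
  · rw [hx, zabs, dif_pos rfl, zabs, dif_neg hy]
    simp only [zero_lt_iff, hy, ne_eq, not_false_eq_true, iff_true]
    positivity
  · rw [hy, show zabs q 0 = 0 from dif_pos rfl, zabs, dif_neg hx]
    constructor
    · intro h
      have : (0:ℝ) < (q:ℝ) ^ Multiplicative.toAdd (WithZero.unzero hx) := by positivity
      exact absurd h this.not_gt
    · intro h
      exact absurd h not_lt_zero'
  · rw [zabs, dif_neg hx, zabs, dif_neg hy, zpow_lt_zpow_iff_right₀ hq',
      Multiplicative.toAdd_lt, ← WithZero.coe_lt_coe, WithZero.coe_unzero, WithZero.coe_unzero]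

theorem zabs_le_iff {q : ℕ} (hq : 1 < q) {x y : ℤₘ₀} :
    zabs q x ≤ zabs q y ↔ x ≤ y := by
  rw [← not_lt, zabs_lt_iff hq, not_lt]

instance : CompleteSpace (RatFunc.CompletionAtInfty Fq) :=
  @UniformSpace.Completion.completeSpace (RatFunc Fq) (RatFunc.inftyValued Fq).toUniformSpace

theorem v_polyToInfty (p : Polynomial Fq) :
    Valued.v (polyToInfty Fq p) = RatFunc.inftyValuationDef Fq (algebraMap (Polynomial Fq) (RatFunc Fq) p) := by
  rw [RatFunc.valuedCompletionAtInfty.def]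
  exact (@Valued.extensionValuation_apply_coe (RatFunc Fq) _ _ _ (RatFunc.inftyValued Fq)
    (algebraMap (Polynomial Fq) (RatFunc Fq) p)).trans (RatFunc.inftyValued.def Fq)

theorem v_polyToInfty' {p : Polynomial Fq} (hp : p ≠ 0) :
    Valued.v (polyToInfty Fq p) =
      ((Multiplicative.ofAdd (p.natDegree : ℤ) : Multiplicative ℤ) : ℤₘ₀) := by
  rw [v_polyToInfty, RatFunc.inftyValuation.polynomial Fq hp]; rfl

theorem polyToInfty_mul (f g : Polynomial Fq) :
    polyToInfty Fq (f * g) = polyToInfty Fq f * polyToInfty Fq g := by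
  letI := RatFunc.inftyValued Fq
  simp only [polyToInfty, map_mul, UniformSpace.Completion.coe']
  exact UniformSpace.Completion.coe_mul _ _

theorem polyToInfty_add (f g : Polynomial Fq) :
    polyToInfty Fq (f + g) = polyToInfty Fq f + polyToInfty Fq g := by
  letI := RatFunc.inftyValued Fq
  simp only [polyToInfty, map_add, UniformSpace.Completion.coe']
  exact UniformSpace.Completion.coe_add _ _

theorem polyToInfty_sub (f g : Polynomial Fq) :
    polyToInfty Fq (f - g) = polyToInfty Fq f - polyToInfty Fq g := by
  letI := RatFunc.inftyValued Fq
  simp only [polyToInfty, map_sub, UniformSpace.Completion.coe']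
  exact UniformSpace.Completion.coe_sub _ _

end Aux

theorem coe_ofAdd_eq {a b : ℤ} (h : a = b) :
    ((Multiplicative.ofAdd a : Multiplicative ℤ) : ℤₘ₀) =
      ((Multiplicative.ofAdd b : Multiplicative ℤ) : ℤₘ₀) := by rw [h]

theorem exists_root :
    ∃ α : RatFunc.CompletionAtInfty Fq,
      Valued.v α ≤ ((Multiplicative.ofAdd (-1 : ℤ) : Multiplicative ℤ) : ℤₘ₀) ∧
        α * α + polyToInfty Fq X * α = 1 := by
  classical
  set s : RatFunc.CompletionAtInfty Fq := polyToInfty Fq X with hs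
  have hvs : Valued.v s = ((Multiplicative.ofAdd (1 : ℤ) : Multiplicative ℤ) : ℤₘ₀) := by
    rw [hs, v_polyToInfty' Fq X_ne_zero, natDegree_X, Nat.cast_one]
  -- the continued-fraction iteration
  let a : ℕ → RatFunc.CompletionAtInfty Fq := fun n => Nat.rec 0 (fun _ x => (s + x)⁻¹) n
  have ha0 : a 0 = 0 := rfl
  have haS : ∀ n, a (n + 1) = (s + a n)⁻¹ := fun n => rfl
  have hmono : ∀ n, Valued.v (a n) ≤ ((Multiplicative.ofAdd (-1 : ℤ) : Multiplicative ℤ) : ℤₘ₀) ∧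
      Valued.v (s + a n) = ((Multiplicative.ofAdd (1 : ℤ) : Multiplicative ℤ) : ℤₘ₀) := by
    intro n
    induction n with
    | zero =>
      constructor
      · rw [ha0, map_zero]; exact zero_le'
      · rw [ha0, add_zero, hvs]
    | succ n ih =>
      have h1 : Valued.v (a (n + 1)) =
          ((Multiplicative.ofAdd (-1 : ℤ) : Multiplicative ℤ) : ℤₘ₀) := by
        rw [haS, map_inv₀, ih.2, ← WithZero.coe_inv, ofAdd_neg]
      refine ⟨le_of_eq h1, ?_⟩
      rw [add_comm]
      rw [Valuation.map_add_eq_of_lt_right]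
      · exact hvs
      · rw [h1, hvs, WithZero.coe_lt_coe, Multiplicative.ofAdd_lt]
        norm_num
  have hne : ∀ n, s + a n ≠ 0 := by
    intro n
    have := (hmono n).2
    intro h
    rw [h, map_zero] at this
    exact WithZero.zero_ne_coe this
  have hdiff : ∀ n : ℕ, Valued.v (a (n + 1) - a n) ≤
      ((Multiplicative.ofAdd (-1 - n : ℤ) : Multiplicative ℤ) : ℤₘ₀) := by
    intro n
    induction n with
    | zero =>
      rw [haS, ha0, add_zero, sub_zero, map_inv₀, hvs, ← WithZero.coe_inv,
        WithZero.coe_le_coe, ← ofAdd_neg, Multiplicative.ofAdd_le]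
      norm_num
    | succ n ih =>
      have h1 : s + a n ≠ 0 := hne n
      have h2 : s + (s + a n)⁻¹ ≠ 0 := by rw [← haS n]; exact hne (n + 1)
      have key : a (n + 1 + 1) - a (n + 1) =
          (a n - a (n + 1)) * ((s + a (n + 1)) * (s + a n))⁻¹ := by
        rw [haS (n + 1), haS n, inv_sub_inv h2 h1, div_eq_mul_inv]
        congr 1
        ring
      rw [key, map_mul, map_inv₀, map_mul, (hmono n).2, (hmono (n + 1)).2,
        Valuation.map_sub_swap]
      calc Valued.v (a (n + 1) - a n) *
            ((((Multiplicative.ofAdd (1 : ℤ) : Multiplicative ℤ) : ℤₘ₀)) *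
              ((Multiplicative.ofAdd (1 : ℤ) : Multiplicative ℤ) : ℤₘ₀))⁻¹
          ≤ ((Multiplicative.ofAdd (-1 - n : ℤ) : Multiplicative ℤ) : ℤₘ₀) *
            ((((Multiplicative.ofAdd (1 : ℤ) : Multiplicative ℤ) : ℤₘ₀)) *
              ((Multiplicative.ofAdd (1 : ℤ) : Multiplicative ℤ) : ℤₘ₀))⁻¹ :=
            mul_le_mul_left ih _
        _ ≤ ((Multiplicative.ofAdd (-1 - (n + 1 : ℕ) : ℤ) : Multiplicative ℤ) : ℤₘ₀) := by
            rw [← WithZero.coe_mul, ← WithZero.coe_inv, ← WithZero.coe_mul, WithZero.coe_le_coe,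
              ← ofAdd_add, ← ofAdd_neg, ← ofAdd_add, Multiplicative.ofAdd_le]
            push_cast
            omega
  have hfar : ∀ n m : ℕ, n ≤ m → Valued.v (a m - a n) ≤
      ((Multiplicative.ofAdd (-1 - n : ℤ) : Multiplicative ℤ) : ℤₘ₀) := by
    intro n m hnm
    induction m, hnm using Nat.le_induction with
    | base => rw [sub_self, map_zero]; exact zero_le'
    | succ m hnm ih =>
      have : a (m + 1) - a n = (a (m + 1) - a m) + (a m - a n) := by ring
      rw [this]
      refine le_trans (Valuation.map_add _ _ _) (max_le (le_trans (hdiff m) ?_) ih)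
      rw [WithZero.coe_le_coe, Multiplicative.ofAdd_le]
      omega
  have hcs : CauchySeq a := by
    rw [(Valued.hasBasis_uniformity (RatFunc.CompletionAtInfty Fq) ℤₘ₀).cauchySeq_iff]
    rintro γ -
    obtain ⟨k, hk⟩ := WithZero.ne_zero_iff_exists.mp
      ((_root_.map_ne_zero MonoidWithZeroHom.ValueGroup₀.embedding).mpr γ.ne_zero)
    refine ⟨(Multiplicative.toAdd k).natAbs + 1, fun m hm n hn => ?_⟩
    have hb : ∀ i j : ℕ, (Multiplicative.toAdd k).natAbs + 1 ≤ i →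
        (Multiplicative.toAdd k).natAbs + 1 ≤ j → i ≤ j →
        Valued.v (a j - a i) < MonoidWithZeroHom.ValueGroup₀.embedding γ.1 := by
      intro i j hi hj hij
      refine lt_of_le_of_lt (hfar i j hij) ?_
      rw [← hk, WithZero.coe_lt_coe]
      rw [← ofAdd_toAdd k, Multiplicative.ofAdd_lt]
      omega
    rcases le_total m n with h | h
    · exact (Valuation.restrict_lt_iff_lt_embedding _).mpr (hb m n hm hn h)
    · show Valued.v.restrict (a n - a m) < γ.1
      rw [Valuation.restrict_lt_iff_lt_embedding, Valuation.map_sub_swap]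
      exact hb n m hn hm h
  obtain ⟨α, hα⟩ := cauchySeq_tendsto_of_complete hcs
  have hαv : Valued.v α ≤ ((Multiplicative.ofAdd (-1 : ℤ) : Multiplicative ℤ) : ℤₘ₀) := by
    have hmem : {y : RatFunc.CompletionAtInfty Fq |
        Valued.v (y - α) < ((Multiplicative.ofAdd (-1 : ℤ) : Multiplicative ℤ) : ℤₘ₀)} ∈ nhds α := by
      rw [Valued.mem_nhds]
      have hs0 : Valued.v.restrict s⁻¹ ≠ 0 := by
        rw [ne_eq, map_eq_zero, inv_eq_zero]
        intro h; rw [h, map_zero] at hvs; exact WithZero.zero_ne_coe hvs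
      refine ⟨Units.mk0 _ hs0, fun y hy => ?_⟩
      have hy' : Valued.v.restrict (y - α) < Valued.v.restrict s⁻¹ := hy
      rw [Valuation.restrict_lt_iff, map_inv₀, hvs, ← WithZero.coe_inv, ← ofAdd_neg] at hy'
      exact hy'
    have hev : ∀ᶠ n in atTop, Valued.v (a n - α) <
        ((Multiplicative.ofAdd (-1 : ℤ) : Multiplicative ℤ) : ℤₘ₀) := hα hmem
    obtain ⟨n, hn⟩ := hev.exists
    have : α = a n - (a n - α) := by ring
    rw [this]
    refine le_trans (Valuation.map_sub _ _ _) (max_le (hmono n).1 (le_of_lt hn))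
  have hvsα : Valued.v (s + α) = ((Multiplicative.ofAdd (1 : ℤ) : Multiplicative ℤ) : ℤₘ₀) := by
    rw [Valuation.map_add_eq_of_lt_left]
    · exact hvs
    · rw [hvs]
      refine lt_of_le_of_lt hαv ?_
      rw [WithZero.coe_lt_coe, Multiplicative.ofAdd_lt]
      norm_num
  have hsα : s + α ≠ 0 := by
    intro h
    rw [h, map_zero] at hvsα
    exact WithZero.zero_ne_coe hvsα
  have hlim2 : Tendsto (fun n => a (n + 1)) atTop (nhds α) :=
    hα.comp (tendsto_add_atTop_nat 1)
  have hlim3 : Tendsto (fun n => (s + a n)⁻¹) atTop (nhds (s + α)⁻¹) :=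
    (tendsto_const_nhds.add hα).inv₀ hsα
  have hfix : α = (s + α)⁻¹ := by
    refine tendsto_nhds_unique hlim2 ?_
    exact hlim3
  have h1 : α * (s + α) = 1 := by
    nth_rewrite 1 [hfix]
    exact inv_mul_cancel₀ hsα
  exact ⟨α, hαv, by linear_combination h1⟩

open Multiplicative WithZero in
theorem not_approx_aux (α : RatFunc.CompletionAtInfty Fq)
    (hα1 : Valued.v α ≤ ((ofAdd (-1 : ℤ) : Multiplicative ℤ) : ℤₘ₀))
    (hroot : α * α + polyToInfty Fq X * α = 1)
    (f g : Polynomial Fq) (hg : g ≠ 0) (hcop : IsCoprime f g)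
    (hlt : Valued.v (α - polyToInfty Fq f / polyToInfty Fq g) <
      ((ofAdd (-1 - 2 * (g.natDegree : ℤ)) : Multiplicative ℤ) : ℤₘ₀)) : False := by
  set s : RatFunc.CompletionAtInfty Fq := polyToInfty Fq X with hs
  set F : RatFunc.CompletionAtInfty Fq := polyToInfty Fq f with hF
  set G : RatFunc.CompletionAtInfty Fq := polyToInfty Fq g with hG'
  set d : ℤ := (g.natDegree : ℤ) with hd
  have hd0 : 0 ≤ d := Int.natCast_nonneg _
  have hvs : Valued.v s = ((ofAdd (1 : ℤ) : Multiplicative ℤ) : ℤₘ₀) := by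
    rw [hs, v_polyToInfty' Fq X_ne_zero, natDegree_X, Nat.cast_one]
  have hG : Valued.v G = ((ofAdd d : Multiplicative ℤ) : ℤₘ₀) := v_polyToInfty' Fq hg
  have hGne : G ≠ 0 := by
    intro h; rw [h, map_zero] at hG; exact WithZero.zero_ne_coe hG
  have hn0 : f ^ 2 + X * f * g - g ^ 2 ≠ 0 := by
    intro hn
    have hfd : f ∣ g * g := ⟨f + X * g, by linear_combination -hn⟩
    have hgd : g ∣ f * f := ⟨g - X * f, by linear_combination hn⟩
    have hfu : IsUnit f := (hcop.mul_right hcop).isUnit_of_dvd' dvd_rfl hfd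
    have hgu : IsUnit g := (hcop.symm.mul_right hcop.symm).isUnit_of_dvd' dvd_rfl hgd
    obtain ⟨a, ha, haf⟩ := Polynomial.isUnit_iff.mp hfu
    obtain ⟨b, hb, hbg⟩ := Polynomial.isUnit_iff.mp hgu
    rw [← haf, ← hbg] at hn
    have h1 : a * b = 0 := by
      have h2 := congrArg (fun p : Polynomial Fq => p.coeff 1) hn
      simp only [coeff_sub, coeff_add, ← C_pow, coeff_C, coeff_mul_C, coeff_X_one,
        coeff_zero, one_ne_zero, if_false, one_mul] at h2
      simpa using h2
    rcases mul_eq_zero.mp h1 with h | h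
    · exact ha.ne_zero h
    · exact hb.ne_zero h
  have hvN : ((ofAdd (0 : ℤ) : Multiplicative ℤ) : ℤₘ₀) ≤
      Valued.v (polyToInfty Fq (f ^ 2 + X * f * g - g ^ 2)) := by
    rw [v_polyToInfty' Fq hn0, WithZero.coe_le_coe, Multiplicative.ofAdd_le]
    exact Int.natCast_nonneg _
  have hN : polyToInfty Fq (f ^ 2 + X * f * g - g ^ 2) = F * F + s * (F * G) - G * G := by
    have e : f ^ 2 + X * f * g - g ^ 2 = f * f + X * (f * g) - g * g := by ring
    rw [e, polyToInfty_sub, polyToInfty_add, polyToInfty_mul, polyToInfty_mul,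
      polyToInfty_mul, polyToInfty_mul]
  have hDN : G * α - F = G * (α - F / G) := by
    rw [mul_sub, mul_div_cancel₀ _ hGne]
  have hE : Valued.v (G * α - F) < ((ofAdd (-1 - d) : Multiplicative ℤ) : ℤₘ₀) := by
    rw [hDN, map_mul, hG]
    have h1 := mul_lt_mul_of_le_of_lt_of_nonneg_of_pos (le_refl ((ofAdd d : Multiplicative ℤ) : ℤₘ₀))
      hlt zero_le' (zero_lt_iff.2 WithZero.coe_ne_zero)
    refine lt_of_lt_of_le h1 (le_of_eq ?_)
    rw [← WithZero.coe_mul, ← ofAdd_add]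
    exact coe_ofAdd_eq (by ring)
  have hFv : Valued.v F ≤ ((ofAdd (d - 1) : Multiplicative ℤ) : ℤₘ₀) := by
    have e : F = (F - G * α) + G * α := by ring
    rw [e]
    refine le_trans (Valuation.map_add _ _ _) (max_le ?_ ?_)
    · rw [Valuation.map_sub_swap]
      refine le_trans (le_of_lt hE) ?_
      rw [WithZero.coe_le_coe, Multiplicative.ofAdd_le]
      omega
    · rw [map_mul, hG]
      refine le_trans (mul_le_mul_right hα1 _) (le_of_eq ?_)
      rw [← WithZero.coe_mul, ← ofAdd_add]
      exact coe_ofAdd_eq (by ring)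
  have hGαv : Valued.v (G * α) ≤ ((ofAdd (d - 1) : Multiplicative ℤ) : ℤₘ₀) := by
    rw [map_mul, hG]
    refine le_trans (mul_le_mul_right hα1 _) (le_of_eq ?_)
    rw [← WithZero.coe_mul, ← ofAdd_add]
    exact coe_ofAdd_eq (by ring)
  have hBv : Valued.v (F + s * G + G * α) ≤ ((ofAdd (d + 1) : Multiplicative ℤ) : ℤₘ₀) := by
    refine le_trans (Valuation.map_add _ _ _) (max_le (le_trans (Valuation.map_add _ _ _)
      (max_le ?_ ?_)) ?_)
    · refine le_trans hFv ?_
      rw [WithZero.coe_le_coe, Multiplicative.ofAdd_le]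
      omega
    · rw [map_mul, hvs, hG]
      refine le_of_eq ?_
      rw [← WithZero.coe_mul, ← ofAdd_add]
      exact coe_ofAdd_eq (by ring)
    · refine le_trans hGαv ?_
      rw [WithZero.coe_le_coe, Multiplicative.ofAdd_le]
      omega
  have hfac : polyToInfty Fq (f ^ 2 + X * f * g - g ^ 2) = (F - G * α) * (F + s * G + G * α) := by
    rw [hN]
    linear_combination (G * G) * hroot
  have hcontr : Valued.v (polyToInfty Fq (f ^ 2 + X * f * g - g ^ 2)) <
      ((ofAdd (0 : ℤ) : Multiplicative ℤ) : ℤₘ₀) := by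
    rw [hfac, map_mul, Valuation.map_sub_swap]
    have h2 := mul_lt_mul_of_le_of_lt_of_nonneg_of_pos hBv hE zero_le'
      (zero_lt_iff.2 WithZero.coe_ne_zero)
    rw [mul_comm] at h2
    refine lt_of_lt_of_le h2 (le_of_eq ?_)
    rw [← WithZero.coe_mul, ← ofAdd_add]
    exact coe_ofAdd_eq (by ring)
  exact absurd hvN hcontr.not_ge

/-- first assertion of Theorem 1.3 for `A = F_q[t]`, where `N = 0`:
there is an element of `O_∞` that is not `1`-approximable. -/
theorem exists_not_one_approximable (q : ℕ) (hq : Fintype.card Fq = q) :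
    ∃ α ∈ Oinfty Fq q,
      ¬ ∃ f g : ℕ → Polynomial Fq, (∀ n, IsApprox Fq q 1 α (f n) (g n)) ∧
        Tendsto (fun n => polyToInfty Fq (f n) / polyToInfty Fq (g n)) atTop (nhds α) := by
  obtain ⟨α, hαv, hroot⟩ := exists_root Fq
  have hq2 : 1 < q := hq ▸ Fintype.one_lt_card
  have hq0 : (0 : ℝ) < (q : ℝ) := by positivity
  refine ⟨α, ?_, ?_⟩
  · show absInfty Fq q α ≤ 1
    have h1 : (1 : ℝ) = zabs q ((Multiplicative.ofAdd (0 : ℤ) : Multiplicative ℤ) : ℤₘ₀) := by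
      rw [zabs_coe, zpow_zero]
    rw [absInfty, h1, zabs_le_iff hq2]
    refine le_trans hαv ?_
    rw [WithZero.coe_le_coe, Multiplicative.ofAdd_le]
    norm_num
  · rintro ⟨f, g, hap, -⟩
    obtain ⟨hg0, hcop, hlt⟩ := hap 0
    set d : ℤ := ((g 0).natDegree : ℤ) with hd
    refine not_approx_aux Fq α hαv hroot (f 0) (g 0) hg0 hcop ?_
    have hG : absInfty Fq q (polyToInfty Fq (g 0)) = (q : ℝ) ^ d := by
      rw [absInfty, v_polyToInfty' Fq hg0, zabs_coe]
    rw [hG] at hlt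
    have hqne : (q : ℝ) ≠ 0 := ne_of_gt (by exact_mod_cast Nat.lt_of_lt_of_le Nat.zero_lt_one hq2.le)
    have hrhs : (q : ℝ) ^ (-(1 : ℤ)) / ((q : ℝ) ^ d) ^ 2 = (q : ℝ) ^ (-1 - 2 * d) := by
      rw [← zpow_natCast ((q : ℝ) ^ d) 2, ← zpow_mul, ← zpow_sub₀ hqne]
      congr 1
      push_cast
      ring
    rw [hrhs, ← zabs_coe q (-1 - 2 * d)] at hlt
    exact (zabs_lt_iff hq2).mp hlt
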